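/- Let p be a prime, R = F_p[t^{a/p^b} : a, b ∈ ℤ_{>0}] the monoid algebra of the positive p-adic rationals over F_p, and a the ideal generated by all t^{a/p^b}. Then a^[p] = a, where a^[p] is the ideal generated by p-th powers of elements of a. Consequently the relative Frobenius of R → R/a is an isomorphism, but R → R/a is not flat. -/

import Mathlib

/-- The additive monoid of nonnegative `p`-adic rationals `{a/p^b : a, b ∈ ℕ}`. -/
def pAdicMonoid (p : ℕ) : AddSubmonoid ℚ :=
  AddSubmonoid.closure (Set.range fun ab : ℕ × ℕ => ((ab.1 : ℚ) / p ^ ab.2))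

/-- `R = 𝔽_p[t^{a/p^b} : a, b > 0]`, the monoid algebra of the nonnegative `p`-adic
rationals over `𝔽_p`. -/
abbrev PAdicRing (p : ℕ) : Type := AddMonoidAlgebra (ZMod p) (pAdicMonoid p)

/-- The ideal `a = (t^{a/p^b} : a, b > 0)` generated by all `t^m` with `m > 0`. -/
noncomputable def pAdicIdeal (p : ℕ) : Ideal (PAdicRing p) :=
  Ideal.span {x | ∃ m : pAdicMonoid p, (m : ℚ) ≠ 0 ∧ x = AddMonoidAlgebra.single m 1}

theorem pAdicIdeal_pow_le (p : ℕ) [Fact p.Prime] :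
    Ideal.span {x : PAdicRing p | ∃ y ∈ pAdicIdeal p, x = y ^ p} ≤ pAdicIdeal p := by
  rw [Ideal.span_le]
  rintro x ⟨y, hy, rfl⟩
  exact Ideal.pow_mem_of_mem _ hy p (Fact.out (p := p.Prime)).pos

lemma pAdicMonoid_nonneg (p : ℕ) {q : ℚ} (hq : q ∈ pAdicMonoid p) : 0 ≤ q := by
  refine AddSubmonoid.closure_induction ?_ le_rfl
    (fun x y _ _ hx hy => add_nonneg hx hy) hq
  rintro x ⟨⟨a, b⟩, rfl⟩; positivity

lemma pAdicMonoid_one_mem (p : ℕ) : (1 : ℚ) ∈ pAdicMonoid p :=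
  AddSubmonoid.subset_closure ⟨(1, 0), by norm_num⟩

lemma pAdicMonoid_div_mem (p : ℕ) {q : ℚ} (hq : q ∈ pAdicMonoid p) :
    q / p ∈ pAdicMonoid p := by
  refine AddSubmonoid.closure_induction (motive := fun x _ => x / (p:ℚ) ∈ pAdicMonoid p) ?_ ?_ ?_ hq
  · rintro x ⟨⟨a, b⟩, rfl⟩
    exact AddSubmonoid.subset_closure ⟨(a, b + 1), by push_cast; rw [pow_succ, div_div]⟩
  · simpa using (pAdicMonoid p).zero_mem
  · intro x y _ _ hx hy; rw [add_div]; exact add_mem hx hy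

instance (p : ℕ) : UniqueSums (pAdicMonoid p) :=
  UniqueSums.of_injective_addHom (AddSubmonoid.subtype (pAdicMonoid p)).toAddHom
    Subtype.coe_injective inferInstance

/-- The "evaluation at t = 0" monoid homomorphism. -/
noncomputable def pAdicAug (p : ℕ) : Multiplicative (pAdicMonoid p) →* ZMod p where
  toFun m := if (Multiplicative.toAdd m).val = 0 then 1 else 0
  map_one' := by simp
  map_mul' m n := by
    have hm := pAdicMonoid_nonneg p (Multiplicative.toAdd m).2
    have hn := pAdicMonoid_nonneg p (Multiplicative.toAdd n).2
    by_cases h1 : (Multiplicative.toAdd m).val = 0 <;>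
      by_cases h2 : (Multiplicative.toAdd n).val = 0 <;>
      simp [toAdd_mul, AddSubmonoid.coe_add, add_eq_zero_iff_of_nonneg hm hn, h1, h2]

lemma pAdicIdeal_le_ker (p : ℕ) [Fact p.Prime] :
    pAdicIdeal p ≤ RingHom.ker ((AddMonoidAlgebra.lift (ZMod p) (ZMod p)
      (pAdicMonoid p)) (pAdicAug p)).toRingHom := by
  rw [pAdicIdeal, Ideal.span_le]
  rintro x ⟨m, hm, rfl⟩
  have hm' : m ≠ 0 := fun h => hm (by rw [h]; rfl)
  simp [RingHom.mem_ker, AddMonoidAlgebra.lift_single, pAdicAug, hm, hm']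

lemma one_not_mem_pAdicIdeal (p : ℕ) [Fact p.Prime] : (1 : PAdicRing p) ∉ pAdicIdeal p := by
  intro h
  have := pAdicIdeal_le_ker p h
  rw [RingHom.mem_ker, map_one] at this
  exact one_ne_zero this

theorem stmt_11 (p : ℕ) [Fact p.Prime] :
    (Ideal.span {x : PAdicRing p | ∃ y ∈ pAdicIdeal p, x = y ^ p} = pAdicIdeal p) ∧
      Function.Bijective
        (Ideal.Quotient.factor (S := Ideal.span {x : PAdicRing p | ∃ y ∈ pAdicIdeal p, x = y ^ p})
          (T := pAdicIdeal p) (pAdicIdeal_pow_le p)) ∧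
      ¬ Module.Flat (PAdicRing p) (PAdicRing p ⧸ pAdicIdeal p) := by
  have hp : (p : ℚ) ≠ 0 := Nat.cast_ne_zero.mpr (Fact.out (p := p.Prime)).ne_zero
  have heq : Ideal.span {x : PAdicRing p | ∃ y ∈ pAdicIdeal p, x = y ^ p} = pAdicIdeal p := by
    refine le_antisymm (pAdicIdeal_pow_le p) ?_
    rw [pAdicIdeal, Ideal.span_le]
    rintro x ⟨m, hm, rfl⟩
    set m' : pAdicMonoid p := ⟨(m : ℚ) / p, pAdicMonoid_div_mem p m.2⟩ with hm'
    have hm'ne : (m' : ℚ) ≠ 0 := div_ne_zero hm hp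
    have hsmul : p • m' = m := by
      ext
      push_cast [hm']
      rw [nsmul_eq_mul, mul_div_cancel₀ _ hp]
    refine Ideal.subset_span ⟨AddMonoidAlgebra.single m' 1,
      Ideal.subset_span ⟨m', hm'ne, rfl⟩, ?_⟩
    rw [AddMonoidAlgebra.single_pow, one_pow, hsmul]
  refine ⟨heq, ⟨?_, ?_⟩, ?_⟩
  · intro a b hab
    obtain ⟨a, rfl⟩ := Ideal.Quotient.mk_surjective a
    obtain ⟨b, rfl⟩ := Ideal.Quotient.mk_surjective b
    rw [Ideal.Quotient.factor_mk, Ideal.Quotient.factor_mk, Ideal.Quotient.eq] at hab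
    rw [Ideal.Quotient.eq, heq]
    exact hab
  · intro y
    obtain ⟨y, rfl⟩ := Ideal.Quotient.mk_surjective y
    exact ⟨Ideal.Quotient.mk _ y, Ideal.Quotient.factor_mk _ y⟩
  · intro hflat
    set t : PAdicRing p := AddMonoidAlgebra.single ⟨1, pAdicMonoid_one_mem p⟩ 1 with ht
    have htmem : t ∈ pAdicIdeal p :=
      Ideal.subset_span ⟨⟨1, pAdicMonoid_one_mem p⟩, one_ne_zero, rfl⟩
    have htne : t ≠ 0 := by
      rw [ht]
      exact fun h0 => one_ne_zero (AddMonoidAlgebra.single_eq_zero.mp h0)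
    have hrel : ∑ _i : Unit, t • (Ideal.Quotient.mk (pAdicIdeal p) 1) = 0 := by
      rw [Fintype.sum_unique, ← Ideal.Quotient.mk_eq_mk, ← Submodule.Quotient.mk_smul,
        smul_eq_mul, mul_one, Ideal.Quotient.mk_eq_mk, Ideal.Quotient.eq_zero_iff_mem]
      exact htmem
    obtain ⟨κ, a, y, hx, ha⟩ :=
      Module.Flat.isTrivialRelation_of_sum_smul_eq_zero
        (f := fun _ : Unit => t) (x := fun _ : Unit => Ideal.Quotient.mk (pAdicIdeal p) 1) hrel
    have ha0 : ∀ j, a () j = 0 := by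
      intro j
      have := ha j
      simp only [Fintype.sum_unique] at this
      exact (mul_eq_zero.mp this).resolve_left htne
    have h1 := hx ()
    simp only [ha0, zero_smul, Finset.sum_const_zero] at h1
    exact one_not_mem_pAdicIdeal p (Ideal.Quotient.eq_zero_iff_mem.mp h1)
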